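/- The characteristic Z-valued series identity of the Lazard bisection holds: the characteristic series of M(Σ,θ) equals the product of the characteristic series of L and of M(B,θ_B) in the large algebra Z[[M(Σ,θ)]]; equivalently, for every trace t, the number of pairs (l,m) ∈ L × M(B,θ_B) with l·m = t equals 1. -/

import Mathlib

attribute [local instance] Classical.propDecidable

/-- The relation `ab ~ ba` for commuting pairs `(a,b) ∈ θ`. -/
def traceRel {α : Type} (θ : α → α → Prop) : FreeMonoid α → FreeMonoid α → Prop :=
  fun u v => ∃ a b, θ a b ∧ u = FreeMonoid.of a * FreeMonoid.of b ∧
    v = FreeMonoid.of b * FreeMonoid.of a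

/-- The trace congruence generated by `ab ~ ba` for `(a,b) ∈ θ`. -/
def traceCon {α : Type} (θ : α → α → Prop) : Con (FreeMonoid α) := conGen (traceRel θ)

/-- The trace monoid `M(Σ,θ)`. -/
abbrev TraceMonoid {α : Type} (θ : α → α → Prop) := (traceCon θ).Quotient

/-- The canonical surjection `φ : Σ* → M(Σ,θ)`. -/
def phi {α : Type} (θ : α → α → Prop) : FreeMonoid α →* TraceMonoid θ := (traceCon θ).mk'

namespace Lazard

variable {α : Type} {θ : α → α → Prop}

/-- Word-level trace equivalence. -/
def eqv (θ : α → α → Prop) (u v : List α) : Prop :=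
  traceCon θ (FreeMonoid.ofList u) (FreeMonoid.ofList v)

lemma phi_apply (x : FreeMonoid α) : phi θ x = (x : TraceMonoid θ) := rfl

lemma phi_eq_iff {u v : FreeMonoid α} : phi θ u = phi θ v ↔ traceCon θ u v := by
  rw [phi_apply, phi_apply]; exact Con.eq _

lemma eqv_refl (u : List α) : eqv θ u u := (traceCon θ).refl _

lemma eqv_symm {u v : List α} (h : eqv θ u v) : eqv θ v u := (traceCon θ).symm h

lemma eqv_trans {u v w : List α} (h : eqv θ u v) (h' : eqv θ v w) : eqv θ u w :=
  (traceCon θ).trans h h'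

lemma eqv_append {u u' v v' : List α} (h : eqv θ u u') (h' : eqv θ v v') :
    eqv θ (u ++ v) (u' ++ v') := by
  have := (traceCon θ).mul h h'
  simpa [eqv, FreeMonoid.ofList_append] using this

lemma eqv_swap {a b : α} (h : θ a b) (l r : List α) :
    eqv θ (l ++ a :: b :: r) (l ++ b :: a :: r) := by
  have base : eqv θ [a, b] [b, a] :=
    ConGen.Rel.of _ _ ⟨a, b, h, rfl, rfl⟩
  have := eqv_append (eqv_append (eqv_refl l) base) (eqv_refl r)
  simpa using this

lemma eqv_cons_commute {b : α} {s : List α} (h : ∀ c ∈ s, θ b c) :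
    eqv θ (b :: s) (s ++ [b]) := by
  induction s with
  | nil => exact eqv_refl _
  | cons c s ih =>
    have h1 : eqv θ (b :: c :: s) (c :: b :: s) := eqv_swap (h c (by simp)) [] s
    have h2 : eqv θ (c :: b :: s) (c :: (s ++ [b])) := by
      have := eqv_append (eqv_refl [c]) (ih (fun x hx => h x (by simp [hx])))
      simpa using this
    exact eqv_trans h1 (by simpa using h2)

lemma eqv_extract {b : α} {w₁ w₂ : List α} (h : ∀ c ∈ w₂, θ b c) :
    eqv θ (w₁ ++ b :: w₂) ((w₁ ++ w₂) ++ [b]) := by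
  have := eqv_append (eqv_refl w₁) (eqv_cons_commute h)
  simpa [List.append_assoc] using this

/-- The multiset-of-letters congruence. -/
def multisetCon (α : Type) : Con (FreeMonoid α) where
  r u v := (↑(FreeMonoid.toList u) : Multiset α) = ↑(FreeMonoid.toList v)
  iseqv := ⟨fun _ => rfl, Eq.symm, Eq.trans⟩
  mul' {u v u' v'} h h' := by
    show (↑(FreeMonoid.toList (u * u')) : Multiset α) = ↑(FreeMonoid.toList (v * v'))
    rw [FreeMonoid.toList_mul, FreeMonoid.toList_mul, ← Multiset.coe_add, ← Multiset.coe_add,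
      h, h']

lemma letters_eq (hsymm : ∀ x y, θ x y → θ y x) {u v : FreeMonoid α}
    (h : traceCon θ u v) :
    (↑(FreeMonoid.toList u) : Multiset α) = ↑(FreeMonoid.toList v) := by
  refine (Con.conGen_le (c := multisetCon α)).2 ?_ h
  rintro x y ⟨a, b, hab, rfl, rfl⟩
  show ((([a, b] : List α)) : Multiset α) = (([b, a] : List α) : Multiset α)
  exact Multiset.coe_eq_coe.2 (List.Perm.swap _ _ _)

/-- The projection congruence for a pair of letters. -/
def projCon (a b : α) : Con (FreeMonoid α) where
  r u v := (FreeMonoid.toList u).filter (fun x => x = a ∨ x = b)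
      = (FreeMonoid.toList v).filter (fun x => x = a ∨ x = b)
  iseqv := ⟨fun _ => rfl, Eq.symm, Eq.trans⟩
  mul' {u v u' v'} h h' := by
    show ((FreeMonoid.toList (u * u')).filter _) = ((FreeMonoid.toList (v * v')).filter _)
    rw [FreeMonoid.toList_mul, FreeMonoid.toList_mul, List.filter_append, List.filter_append,
      h, h']

lemma proj_eq (hsymm : ∀ x y, θ x y → θ y x) {a b : α} (hab : ¬ θ a b)
    {u v : FreeMonoid α} (h : traceCon θ u v) :
    (FreeMonoid.toList u).filter (fun x => x = a ∨ x = b)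
      = (FreeMonoid.toList v).filter (fun x => x = a ∨ x = b) := by
  refine (Con.conGen_le (c := projCon a b)).2 ?_ h
  rintro x y ⟨c, d, hcd, rfl, rfl⟩
  show (([c, d] : List α).filter (fun x => x = a ∨ x = b))
      = (([d, c] : List α).filter (fun x => x = a ∨ x = b))
  by_cases hc : (c = a ∨ c = b) <;> by_cases hd : (d = a ∨ d = b)
  · -- both kept: show c = d
    have hcd' : c = d := by
      rcases hc with rfl | rfl <;> rcases hd with rfl | rfl
      · rfl
      · exact absurd hcd hab
      · exact absurd (hsymm _ _ hcd) hab
      · rfl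
    subst hcd'; rfl
  · simp [List.filter, hc, hd]
  · simp [List.filter, hc, hd]
  · simp [List.filter, hc, hd]

end Lazard
/-- The terminal alphabet of a trace. -/
def TA {α : Type} (θ : α → α → Prop) (t : TraceMonoid θ) : Set α :=
  {x | ∃ u : TraceMonoid θ, t = u * phi θ (FreeMonoid.of x)}

/-- The left Lazard factor: traces whose terminal alphabet avoids `B`. -/
def leftFactor {α : Type} (θ : α → α → Prop) (B : Set α) : Set (TraceMonoid θ) :=
  {t | TA θ t ∩ B = ∅}

/-- The submonoid of `M(Σ,θ)` generated by the letters of `B`,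
identified with `M(B,θ_B)`. -/
def subTrace {α : Type} (θ : α → α → Prop) (B : Set α) : Submonoid (TraceMonoid θ) :=
  Submonoid.closure ((fun x => phi θ (FreeMonoid.of x)) '' B)

namespace Lazard
variable {α : Type} {θ : α → α → Prop}

lemma mem_split_first {a : α} {l : List α} (h : a ∈ l) :
    ∃ l₁ l₂, l = l₁ ++ a :: l₂ ∧ a ∉ l₁ := by
  induction l with
  | nil => simp at h
  | cons x xs ih =>
    by_cases hx : a = x
    · exact ⟨[], xs, by simp [hx], by simp⟩
    · have : a ∈ xs := by rcases List.mem_cons.1 h with h | h; exact absurd h hx; exact h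
      obtain ⟨l₁, l₂, rfl, hl₁⟩ := ih this
      exact ⟨x :: l₁, l₂, rfl, by simp [hl₁, hx]⟩

lemma mem_split_last {a : α} {l : List α} (h : a ∈ l) :
    ∃ l₁ l₂, l = l₁ ++ a :: l₂ ∧ a ∉ l₂ := by
  induction l with
  | nil => simp at h
  | cons x xs ih =>
    by_cases hxs : a ∈ xs
    · obtain ⟨l₁, l₂, rfl, hl₂⟩ := ih hxs
      exact ⟨x :: l₁, l₂, rfl, hl₂⟩
    · have hx : a = x := by rcases List.mem_cons.1 h with h | h; exact h; exact absurd h hxs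
      exact ⟨[], xs, by simp [hx], hxs⟩
end Lazard
namespace Lazard
variable {α : Type} {θ : α → α → Prop}

/-- Completeness of projections (Cori–Perrin projection lemma). -/
lemma eqv_of_proj (hrefl : ∀ x, θ x x) (hsymm : ∀ x y, θ x y → θ y x) :
    ∀ u v : List α, (↑u : Multiset α) = ↑v →
      (∀ a b, ¬ θ a b →
        u.filter (fun x => x = a ∨ x = b) = v.filter (fun x => x = a ∨ x = b)) →
      eqv θ u v := by
  intro u
  induction u with
  | nil =>
    intro v hm _
    have : v = [] := by
      have := hm.symm
      rwa [show ((([] : List α)) : Multiset α) = 0 from rfl, Multiset.coe_eq_zero] at this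
    subst this; exact eqv_refl []
  | cons a u ih =>
    intro v hm hp
    have hav : a ∈ v := by
      have : a ∈ (↑v : Multiset α) := by rw [← hm]; simp
      simpa using this
    obtain ⟨v₁, v₂, rfl, hv₁⟩ := mem_split_first hav
    have hcomm : ∀ c ∈ v₁, θ a c := by
      intro c hc
      by_contra hnc
      have hfe := hp a c hnc
      simp only [List.filter_append, List.filter_cons, decide_eq_true_eq,
        eq_self_iff_true, true_or, if_true] at hfe
      cases hfv : v₁.filter (fun x => decide (x = a ∨ x = c)) with
      | nil =>
        have : c ∈ v₁.filter (fun x => decide (x = a ∨ x = c)) := by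
          simp [List.mem_filter, hc]
        rw [hfv] at this; simp at this
      | cons d rest =>
        rw [hfv] at hfe
        have had : a = d := by simpa using congrArg (·.head?) hfe
        have : d ∈ v₁ := (List.mem_filter.1 (hfv ▸ (List.mem_cons_self : d ∈ d :: rest))).1
        exact hv₁ (had ▸ this)
    have hm' : (↑u : Multiset α) = ↑(v₁ ++ v₂) := by
      have h1 : (a ::ₘ (↑u : Multiset α)) = a ::ₘ (↑(v₁ ++ v₂) : Multiset α) := by
        have h2 : (↑(v₁ ++ a :: v₂) : Multiset α) = a ::ₘ ↑(v₁ ++ v₂) := by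
          rw [← Multiset.coe_add, ← Multiset.coe_add, ← Multiset.cons_coe,
            Multiset.add_cons]
        rw [← h2, ← hm]; rfl
      exact (Multiset.cons_inj_right a).1 h1
    have hp' : ∀ a' b', ¬ θ a' b' →
        u.filter (fun x => x = a' ∨ x = b')
          = (v₁ ++ v₂).filter (fun x => x = a' ∨ x = b') := by
      intro a' b' h'
      have h0 := hp a' b' h'
      simp only [List.filter_append, List.filter_cons, decide_eq_true_eq] at h0 ⊢
      by_cases hpa : (a = a' ∨ a = b')
      · have hfv₁ : v₁.filter (fun x => decide (x = a' ∨ x = b')) = [] := by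
          rw [List.filter_eq_nil_iff]
          intro x hx
          simp only [decide_eq_true_eq]
          rintro (rfl | rfl)
          · rcases hpa with rfl | rfl
            · exact hv₁ hx
            · exact h' (hsymm _ _ (hcomm _ hx))
          · rcases hpa with rfl | rfl
            · exact h' (hcomm _ hx)
            · exact hv₁ hx
        simp only [if_pos hpa, hfv₁, List.nil_append, List.cons_eq_cons,
          true_and] at h0
        rw [hfv₁, List.nil_append]
        exact h0
      · simp only [if_neg hpa] at h0
        exact h0
    have h1 : eqv θ u (v₁ ++ v₂) := ih _ hm' hp'
    have h2 : eqv θ (a :: u) (a :: (v₁ ++ v₂)) := by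
      have := eqv_append (eqv_refl [a]) h1; simpa using this
    have h3 : eqv θ (a :: (v₁ ++ v₂)) (v₁ ++ a :: v₂) := by
      have := eqv_append (eqv_cons_commute hcomm) (eqv_refl v₂)
      simpa using this
    exact eqv_trans h2 h3

lemma eqv_cancel_right (hrefl : ∀ x, θ x x) (hsymm : ∀ x y, θ x y → θ y x)
    {u v : List α} {b : α} (h : eqv θ (u ++ [b]) (v ++ [b])) : eqv θ u v := by
  apply eqv_of_proj hrefl hsymm
  · have h1 := letters_eq hsymm h
    have h2 : (↑u : Multiset α) + ↑([b] : List α) = (↑v : Multiset α) + ↑([b] : List α) := by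
      rw [Multiset.coe_add, Multiset.coe_add]; exact h1
    exact add_right_cancel h2
  · intro a b' hab
    have h1 := proj_eq hsymm hab h
    rw [show FreeMonoid.toList (FreeMonoid.ofList (u ++ [b])) = u ++ [b] from rfl,
      show FreeMonoid.toList (FreeMonoid.ofList (v ++ [b])) = v ++ [b] from rfl,
      List.filter_append, List.filter_append] at h1
    exact List.append_cancel_right h1

/-- If a word is equivalent to one ending in `b`, all letters after the last `b`
commute with `b`. -/
lemma commute_of_eqv_concat (hrefl : ∀ x, θ x x) (hsymm : ∀ x y, θ x y → θ y x)
    {s₁ s₂ w : List α} {b : α}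
    (h : eqv θ (s₁ ++ b :: s₂) (w ++ [b])) (hb : b ∉ s₂) :
    ∀ c ∈ s₂, θ b c := by
  intro c hc
  by_contra hnc
  have hfe := proj_eq hsymm hnc h
  rw [show FreeMonoid.toList (FreeMonoid.ofList (s₁ ++ b :: s₂)) = s₁ ++ b :: s₂ from rfl,
    show FreeMonoid.toList (FreeMonoid.ofList (w ++ [b])) = w ++ [b] from rfl] at hfe
  simp only [List.filter_append, List.filter_cons, List.filter_nil,
    decide_eq_true_eq, eq_self_iff_true, true_or, if_true] at hfe
  have hne : s₂.filter (fun x => decide (x = b ∨ x = c)) ≠ [] := by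
    intro hnil
    have : c ∈ s₂.filter (fun x => decide (x = b ∨ x = c)) := by
      simp [List.mem_filter, hc]
    rw [hnil] at this; simp at this
  have hL : (s₁.filter (fun x => decide (x = b ∨ x = c))
        ++ b :: s₂.filter (fun x => decide (x = b ∨ x = c))).getLast?
      = (s₂.filter (fun x => decide (x = b ∨ x = c))).getLast? := by
    rw [List.getLast?_append_of_ne_nil _ (List.cons_ne_nil _ _),
      show (b :: s₂.filter (fun x => decide (x = b ∨ x = c)))
        = [b] ++ s₂.filter (fun x => decide (x = b ∨ x = c)) from rfl,
      List.getLast?_append_of_ne_nil _ hne]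
  rw [hfe] at hL
  rw [show (b :: ([] : List α)) = [b] from rfl, List.getLast?_concat] at hL
  have hbmem : b ∈ s₂.filter (fun x => decide (x = b ∨ x = c)) :=
    List.mem_of_mem_getLast? hL.symm
  exact hb (List.mem_filter.1 hbmem).1
end Lazard
namespace Lazard
variable {α : Type} {θ : α → α → Prop}

open FreeMonoid

lemma exists_word (t : TraceMonoid θ) : ∃ w : List α, t = phi θ (FreeMonoid.ofList w) :=
  Con.induction_on t (fun x => ⟨FreeMonoid.toList x, rfl⟩)

lemma mem_TA_iff (b : α) {t : TraceMonoid θ} {w : List α}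
    (ht : t = phi θ (FreeMonoid.ofList w)) :
    b ∈ TA θ t ↔ ∃ w', eqv θ w (w' ++ [b]) := by
  constructor
  · rintro ⟨u, hu⟩
    obtain ⟨w', rfl⟩ := exists_word u
    refine ⟨w', ?_⟩
    have h : phi θ (FreeMonoid.ofList w) = phi θ (FreeMonoid.ofList (w' ++ [b])) := by
      rw [← ht, hu, FreeMonoid.ofList_append, map_mul, FreeMonoid.ofList_singleton]
    exact phi_eq_iff.1 h
  · rintro ⟨w', hw⟩
    refine ⟨phi θ (FreeMonoid.ofList w'), ?_⟩
    rw [ht, ← map_mul, ← FreeMonoid.ofList_singleton, ← FreeMonoid.ofList_append]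
    exact phi_eq_iff.2 hw

noncomputable def tLen (t : TraceMonoid θ) : ℕ := (exists_word t).choose.length

lemma tLen_eq (hsymm : ∀ x y, θ x y → θ y x) {t : TraceMonoid θ} {w : List α}
    (ht : t = phi θ (FreeMonoid.ofList w)) : tLen t = w.length := by
  have hspec := (exists_word t).choose_spec
  have he : eqv θ (exists_word t).choose w := phi_eq_iff.1 (hspec.symm.trans ht)
  have hm := letters_eq hsymm he
  have := congrArg Multiset.card hm
  simpa [tLen, Multiset.coe_card] using this

lemma eq_one_of_tLen_zero (hsymm : ∀ x y, θ x y → θ y x) {t : TraceMonoid θ}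
    (h : tLen t = 0) : t = 1 := by
  obtain ⟨w, rfl⟩ := exists_word t
  rw [tLen_eq hsymm rfl, List.length_eq_zero_iff] at h
  subst h
  exact map_one (phi θ)

lemma tLen_mul_letter (hsymm : ∀ x y, θ x y → θ y x) (u : TraceMonoid θ) (b : α) :
    tLen (u * phi θ (FreeMonoid.of b)) = tLen u + 1 := by
  obtain ⟨w, rfl⟩ := exists_word u
  have h : phi θ (FreeMonoid.ofList w) * phi θ (FreeMonoid.of b)
      = phi θ (FreeMonoid.ofList (w ++ [b])) := by
    rw [FreeMonoid.ofList_append, map_mul, FreeMonoid.ofList_singleton]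
  rw [h, tLen_eq hsymm rfl, tLen_eq hsymm rfl]
  simp

lemma TA_one (hsymm : ∀ x y, θ x y → θ y x) (b : α) : b ∉ TA θ (1 : TraceMonoid θ) := by
  rintro ⟨u, hu⟩
  have h0 : tLen (1 : TraceMonoid θ) = 0 := tLen_eq hsymm (map_one (phi θ)).symm
  rw [hu, tLen_mul_letter hsymm] at h0
  simp at h0

lemma mem_subTrace_iff {B : Set α} {t : TraceMonoid θ} :
    t ∈ subTrace θ B ↔
      ∃ w : List α, (∀ c ∈ w, c ∈ B) ∧ t = phi θ (FreeMonoid.ofList w) := by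
  constructor
  · intro h
    induction h using Submonoid.closure_induction with
    | mem x hx =>
      obtain ⟨b, hb, rfl⟩ := hx
      exact ⟨[b], by simpa using hb, rfl⟩
    | one => exact ⟨[], by simp, (map_one (phi θ)).symm⟩
    | mul x y hx hy ihx ihy =>
      obtain ⟨w₁, hw₁, rfl⟩ := ihx
      obtain ⟨w₂, hw₂, rfl⟩ := ihy
      refine ⟨w₁ ++ w₂, ?_, by rw [FreeMonoid.ofList_append, map_mul]⟩
      intro c hc
      rcases List.mem_append.1 hc with h | h
      · exact hw₁ c h
      · exact hw₂ c h
  · rintro ⟨w, hw, rfl⟩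
    induction w with
    | nil => exact (map_one (phi θ)) ▸ (subTrace θ B).one_mem
    | cons c cs ih =>
      rw [FreeMonoid.ofList_cons, map_mul]
      exact mul_mem (Submonoid.subset_closure ⟨c, hw c (by simp), rfl⟩)
        (ih (fun x hx => hw x (by simp [hx])))

lemma trace_cancel_right (hrefl : ∀ x, θ x x) (hsymm : ∀ x y, θ x y → θ y x)
    {x y : TraceMonoid θ} {b : α}
    (h : x * phi θ (FreeMonoid.of b) = y * phi θ (FreeMonoid.of b)) : x = y := by
  obtain ⟨wx, rfl⟩ := exists_word x
  obtain ⟨wy, rfl⟩ := exists_word y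
  have h1 : phi θ (FreeMonoid.ofList (wx ++ [b])) = phi θ (FreeMonoid.ofList (wy ++ [b])) := by
    rw [FreeMonoid.ofList_append, FreeMonoid.ofList_append, map_mul, map_mul,
      FreeMonoid.ofList_singleton]
    exact h
  exact phi_eq_iff.2 (eqv_cancel_right hrefl hsymm (phi_eq_iff.1 h1))

lemma TA_mul (hrefl : ∀ x, θ x x) (hsymm : ∀ x y, θ x y → θ y x)
    {x y : TraceMonoid θ} {b : α} (hb : b ∈ TA θ (x * y)) :
    b ∈ TA θ x ∨ b ∈ TA θ y := by
  obtain ⟨u, rfl⟩ := exists_word x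
  obtain ⟨v, rfl⟩ := exists_word y
  have hxy : phi θ (FreeMonoid.ofList u) * phi θ (FreeMonoid.ofList v)
      = phi θ (FreeMonoid.ofList (u ++ v)) := by rw [FreeMonoid.ofList_append, map_mul]
  rw [hxy] at hb
  obtain ⟨w, hw⟩ := (mem_TA_iff b rfl).1 hb
  have hbmem : b ∈ u ++ v := by
    have hm := letters_eq hsymm hw
    have : b ∈ (↑(u ++ v) : Multiset α) := by
      rw [show ((u ++ v : List α) : Multiset α)
        = ↑(FreeMonoid.toList (FreeMonoid.ofList (u ++ v))) from rfl, hm]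
      simp
    simpa using this
  by_cases hbv : b ∈ v
  · right
    obtain ⟨v₁, v₂, rfl, hv₂⟩ := mem_split_last hbv
    have hsplit : eqv θ ((u ++ v₁) ++ b :: v₂) (w ++ [b]) := by
      simpa [List.append_assoc] using hw
    have hcomm : ∀ c ∈ v₂, θ b c := commute_of_eqv_concat hrefl hsymm hsplit hv₂
    exact (mem_TA_iff b rfl).2 ⟨v₁ ++ v₂, eqv_extract hcomm⟩
  · left
    have hbu : b ∈ u := by
      rcases List.mem_append.1 hbmem with h | h
      · exact h
      · exact absurd h hbv
    obtain ⟨u₁, u₂, rfl, hu₂⟩ := mem_split_last hbu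
    have hnb : b ∉ u₂ ++ v := by simp [hu₂, hbv]
    have hsplit : eqv θ (u₁ ++ b :: (u₂ ++ v)) (w ++ [b]) := by
      simpa [List.append_assoc] using hw
    have hcomm : ∀ c ∈ u₂ ++ v, θ b c := commute_of_eqv_concat hrefl hsymm hsplit hnb
    exact (mem_TA_iff b rfl).2
      ⟨u₁ ++ u₂, eqv_extract (fun c hc => hcomm c (List.mem_append_left _ hc))⟩

lemma subTrace_factor (hsymm : ∀ x y, θ x y → θ y x) {B : Set α} {m : TraceMonoid θ} {b : α}
    (hm : m ∈ subTrace θ B) (hb : b ∈ TA θ m) :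
    ∃ u ∈ subTrace θ B, m = u * phi θ (FreeMonoid.of b) := by
  obtain ⟨w, hwB, rfl⟩ := mem_subTrace_iff.1 hm
  obtain ⟨w', hw'⟩ := (mem_TA_iff b rfl).1 hb
  refine ⟨phi θ (FreeMonoid.ofList w'), ?_, ?_⟩
  · refine mem_subTrace_iff.2 ⟨w', ?_, rfl⟩
    intro c hc
    have hmeq := letters_eq hsymm hw'
    have : c ∈ (↑w : Multiset α) := by
      rw [show ((w : List α) : Multiset α)
        = ↑(FreeMonoid.toList (FreeMonoid.ofList w)) from rfl, hmeq]
      simp [hc]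
    exact hwB c (by simpa using this)
  · rw [← map_mul, ← FreeMonoid.ofList_singleton, ← FreeMonoid.ofList_append]
    exact phi_eq_iff.2 hw'

lemma subTrace_ne_one {B : Set α} {m : TraceMonoid θ}
    (hm : m ∈ subTrace θ B) (hne : m ≠ 1) :
    ∃ b ∈ B, ∃ u ∈ subTrace θ B, m = u * phi θ (FreeMonoid.of b) := by
  obtain ⟨w, hwB, rfl⟩ := mem_subTrace_iff.1 hm
  rcases List.eq_nil_or_concat w with rfl | ⟨w', b, rfl⟩
  · exact absurd (map_one (phi θ)) hne
  · refine ⟨b, hwB b (by simp), phi θ (FreeMonoid.ofList w'),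
      mem_subTrace_iff.2 ⟨w', fun c hc => hwB c (by simp [hc]), rfl⟩, ?_⟩
    rw [List.concat_eq_append, FreeMonoid.ofList_append, map_mul,
      FreeMonoid.ofList_singleton]

end Lazard
namespace Lazard
variable {α : Type} {θ : α → α → Prop}

lemma exists_factorization (hrefl : ∀ x, θ x x) (hsymm : ∀ x y, θ x y → θ y x)
    (B : Set α) :
    ∀ n (t : TraceMonoid θ), tLen t ≤ n →
      ∃ p : TraceMonoid θ × TraceMonoid θ,
        p.1 ∈ leftFactor θ B ∧ p.2 ∈ subTrace θ B ∧ p.1 * p.2 = t := by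
  intro n
  induction n with
  | zero =>
    intro t ht
    have h1 : t = 1 := eq_one_of_tLen_zero hsymm (Nat.le_zero.1 ht)
    subst h1
    refine ⟨(1, 1), ?_, (subTrace θ B).one_mem, mul_one 1⟩
    show TA θ 1 ∩ B = ∅
    rw [Set.eq_empty_iff_forall_notMem]
    rintro b ⟨hb, -⟩
    exact TA_one hsymm b hb
  | succ n ih =>
    intro t ht
    by_cases h : TA θ t ∩ B = ∅
    · exact ⟨(t, 1), h, (subTrace θ B).one_mem, mul_one t⟩
    · obtain ⟨b, hbTA, hbB⟩ := Set.nonempty_iff_ne_empty.2 h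
      obtain ⟨u, hu⟩ := hbTA
      have hlen : tLen u + 1 ≤ n + 1 := by
        rw [← tLen_mul_letter hsymm u b, ← hu]; exact ht
      obtain ⟨⟨l, m⟩, hl, hm, heq⟩ := ih u (Nat.succ_le_succ_iff.1 hlen)
      refine ⟨(l, m * phi θ (FreeMonoid.of b)), hl,
        mul_mem hm (Submonoid.subset_closure ⟨b, hbB, rfl⟩), ?_⟩
      show l * (m * phi θ (FreeMonoid.of b)) = t
      rw [← mul_assoc]
      show (l * m) * phi θ (FreeMonoid.of b) = t
      rw [heq, ← hu]

lemma unique_factorization (hrefl : ∀ x, θ x x) (hsymm : ∀ x y, θ x y → θ y x)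
    (B : Set α) :
    ∀ n (l₁ m₁ l₂ m₂ : TraceMonoid θ), tLen m₁ ≤ n →
      l₁ ∈ leftFactor θ B → m₁ ∈ subTrace θ B →
      l₂ ∈ leftFactor θ B → m₂ ∈ subTrace θ B →
      l₁ * m₁ = l₂ * m₂ → l₁ = l₂ ∧ m₁ = m₂ := by
  have common : ∀ l₁ l₂ m₂ : TraceMonoid θ,
      l₁ ∈ leftFactor θ B → l₂ ∈ leftFactor θ B → m₂ ∈ subTrace θ B →
      l₁ * 1 = l₂ * m₂ → l₁ = l₂ ∧ (1 : TraceMonoid θ) = m₂ := by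
    intro l₁ l₂ m₂ h1 h3 h4 heq
    have hm₂ : m₂ = 1 := by
      by_contra hne
      obtain ⟨b, hbB, u, hu, rfl⟩ := subTrace_ne_one h4 hne
      have hbTA : b ∈ TA θ l₁ := by
        refine ⟨l₂ * u, ?_⟩
        rw [← mul_one l₁, heq, mul_assoc]
      exact Set.eq_empty_iff_forall_notMem.1 h1 b ⟨hbTA, hbB⟩
    subst hm₂
    constructor
    · rwa [mul_one, mul_one] at heq
    · rfl
  intro n
  induction n with
  | zero =>
    intro l₁ m₁ l₂ m₂ hlen h1 h2 h3 h4 heq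
    have hm₁ : m₁ = 1 := eq_one_of_tLen_zero hsymm (Nat.le_zero.1 hlen)
    subst hm₁
    exact common l₁ l₂ m₂ h1 h3 h4 heq
  | succ n ih =>
    intro l₁ m₁ l₂ m₂ hlen h1 h2 h3 h4 heq
    by_cases hm₁ : m₁ = 1
    · subst hm₁; exact common l₁ l₂ m₂ h1 h3 h4 heq
    · obtain ⟨b, hbB, u₁, hu₁, rfl⟩ := subTrace_ne_one h2 hm₁
      have hbTA : b ∈ TA θ (l₂ * m₂) := by
        refine ⟨l₁ * u₁, ?_⟩
        rw [← heq, mul_assoc]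
      have hbm₂ : b ∈ TA θ m₂ := by
        rcases TA_mul hrefl hsymm hbTA with h | h
        · exact absurd ⟨h, hbB⟩ (Set.eq_empty_iff_forall_notMem.1 h3 b)
        · exact h
      obtain ⟨u₂, hu₂, rfl⟩ := subTrace_factor hsymm h4 hbm₂
      have hcan : l₁ * u₁ = l₂ * u₂ := by
        apply trace_cancel_right hrefl hsymm (b := b)
        rw [mul_assoc, mul_assoc]
        exact heq
      have hlen' : tLen u₁ ≤ n := by
        have := hlen
        rw [tLen_mul_letter hsymm u₁ b] at this
        exact Nat.succ_le_succ_iff.1 this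
      obtain ⟨he1, he2⟩ := ih l₁ u₁ l₂ u₂ hlen' h1 hu₁ h3 hu₂ hcan
      exact ⟨he1, by rw [he2]⟩

end Lazard

/-- the characteristic-series identity
`M(Σ,θ) = L · M(B,θ_B)` — for every trace `t` there is exactly one pair
`(l,m) ∈ L × M(B,θ_B)` with `l·m = t`. -/
theorem characteristic_series_identity {α : Type} [Fintype α] (θ : α → α → Prop)
    (hrefl : ∀ x, θ x x) (hsymm : ∀ x y, θ x y → θ y x) (B : Set α)
    (t : TraceMonoid θ) :
    ∃! p : TraceMonoid θ × TraceMonoid θ,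
      p.1 ∈ leftFactor θ B ∧ p.2 ∈ subTrace θ B ∧ p.1 * p.2 = t := by
  obtain ⟨p, h1, h2, h3⟩ :=
    Lazard.exists_factorization hrefl hsymm B (Lazard.tLen t) t le_rfl
  refine ⟨p, ⟨h1, h2, h3⟩, ?_⟩
  rintro ⟨q₁, q₂⟩ ⟨g1, g2, g3⟩
  have := Lazard.unique_factorization hrefl hsymm B (Lazard.tLen q₂)
    q₁ q₂ p.1 p.2 le_rfl g1 g2 h1 h2 (g3.trans h3.symm)
  exact Prod.ext this.1 this.2
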